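/- Let 0 < b < 1/√8 and define φ(x) = x(1-x)·√((x-1/2)² + b²) for x ∈ (0,1). Then φ has exactly three critical points in (0,1): x₀ = 1/2 and x_{1,2} = 1/2 ± √(1/4 - (1+4b²)/6), with both x₁ and x₂ lying in (0,1). -/

import Mathlib

open Real

theorem stmt_2 (b : ℝ) (hb0 : 0 < b) (hb1 : b < 1 / Real.sqrt 8)
    (φ : ℝ → ℝ) (hφ : ∀ x, φ x = x * (1 - x) * Real.sqrt ((x - 1/2) ^ 2 + b ^ 2)) :
    {x : ℝ | x ∈ Set.Ioo (0 : ℝ) 1 ∧ deriv φ x = 0} =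
      {1/2, 1/2 + Real.sqrt (1/4 - (1 + 4 * b ^ 2) / 6),
        1/2 - Real.sqrt (1/4 - (1 + 4 * b ^ 2) / 6)} ∧
    (1/2 + Real.sqrt (1/4 - (1 + 4 * b ^ 2) / 6)) ∈ Set.Ioo (0 : ℝ) 1 ∧
    (1/2 - Real.sqrt (1/4 - (1 + 4 * b ^ 2) / 6)) ∈ Set.Ioo (0 : ℝ) 1 := by
  have hb2 : b ^ 2 < 1 / 8 := by
    have h8 : (0:ℝ) < Real.sqrt 8 := Real.sqrt_pos.mpr (by norm_num)
    have h1 : b * Real.sqrt 8 < 1 := by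
      rw [div_eq_mul_inv] at hb1
      calc b * Real.sqrt 8 < (1 * (Real.sqrt 8)⁻¹) * Real.sqrt 8 :=
            mul_lt_mul_of_pos_right hb1 h8
        _ = 1 := by field_simp
    nlinarith [Real.sq_sqrt (show (0:ℝ) ≤ 8 by norm_num), Real.sqrt_nonneg 8,
      sq_nonneg (b * Real.sqrt 8 - 1)]
  set D : ℝ := 1/4 - (1 + 4 * b ^ 2) / 6 with hD
  have hDpos : 0 < D := by rw [hD]; nlinarith
  have hDlt : D < 1/4 := by rw [hD]; nlinarith
  have hsD : Real.sqrt D < 1/2 := by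
    have h14 : Real.sqrt (1/4) = 1/2 := by
      rw [show (1:ℝ)/4 = (1/2)^2 by norm_num, Real.sqrt_sq (by norm_num)]
    calc Real.sqrt D < Real.sqrt (1/4) := Real.sqrt_lt_sqrt (le_of_lt hDpos) hDlt
      _ = 1/2 := h14
  have hsDpos : 0 < Real.sqrt D := Real.sqrt_pos.mpr hDpos
  have hsD2 : Real.sqrt D ^ 2 = D := Real.sq_sqrt (le_of_lt hDpos)
  have hg : ∀ x : ℝ, 0 < (x - 1/2) ^ 2 + b ^ 2 := fun x => by positivity
  have hs : ∀ x : ℝ, 0 < Real.sqrt ((x - 1/2) ^ 2 + b ^ 2) :=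
    fun x => Real.sqrt_pos.mpr (hg x)
  have hs2 : ∀ x : ℝ, Real.sqrt ((x - 1/2) ^ 2 + b ^ 2) ^ 2 = (x - 1/2) ^ 2 + b ^ 2 :=
    fun x => Real.sq_sqrt (le_of_lt (hg x))
  have hder : ∀ x : ℝ, deriv φ x =
      (1 - 2*x) * Real.sqrt ((x - 1/2) ^ 2 + b ^ 2)
        + x * (1 - x) * ((x - 1/2) / Real.sqrt ((x - 1/2) ^ 2 + b ^ 2)) := by
    intro x
    have h1 : HasDerivAt (fun y : ℝ => (y - 1/2) ^ 2 + b ^ 2) (2 * (x - 1/2)) x := by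
      have := (((hasDerivAt_id x).sub_const (1/2)).pow 2).add_const (b ^ 2)
      simpa [mul_comm] using this
    have h2 : HasDerivAt (fun y : ℝ => Real.sqrt ((y - 1/2) ^ 2 + b ^ 2))
        ((2 * (x - 1/2)) / (2 * Real.sqrt ((x - 1/2) ^ 2 + b ^ 2))) x :=
      h1.sqrt (ne_of_gt (hg x))
    have h3 : HasDerivAt (fun y : ℝ => y * (1 - y)) (1 - 2*x) x := by
      have := (hasDerivAt_id x).mul ((hasDerivAt_const x (1:ℝ)).sub (hasDerivAt_id x))
      simp only [Pi.mul_def, Pi.sub_apply, id_eq] at this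
      refine this.congr_deriv ?_
      ring
    have h4 := h3.mul h2
    have heq : φ = fun y => (y * (1 - y)) * Real.sqrt ((y - 1/2) ^ 2 + b ^ 2) := by
      funext y; rw [hφ y]
    rw [heq, show (fun y : ℝ => y * (1 - y) * Real.sqrt ((y - 1/2) ^ 2 + b ^ 2)) = (fun y : ℝ => y * (1 - y)) * (fun y : ℝ => Real.sqrt ((y - 1/2) ^ 2 + b ^ 2)) from rfl, h4.deriv]
    have hne := ne_of_gt (hs x)
    field_simp
  have key : ∀ x : ℝ, deriv φ x = 0 ↔
      (x - 1/2) * (x - (1/2 + Real.sqrt D)) * (x - (1/2 - Real.sqrt D)) = 0 := by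
    intro x
    have hne := ne_of_gt (hs x)
    have e : deriv φ x * Real.sqrt ((x - 1/2) ^ 2 + b ^ 2) =
        -3 * ((x - 1/2) * (x - (1/2 + Real.sqrt D)) * (x - (1/2 - Real.sqrt D))) := by
      rw [hder x, add_mul, mul_assoc (x * (1 - x)), div_mul_cancel₀ _ hne]
      linear_combination (-3*(x - 1/2)) * hsD2 + (1 - 2*x) * hs2 x
    constructor
    · intro h
      have := e
      rw [h, zero_mul] at this
      linarith [this]
    · intro h
      have h2 : deriv φ x * Real.sqrt ((x - 1/2) ^ 2 + b ^ 2) = 0 := by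
        rw [e, h]; ring
      exact (mul_eq_zero.mp h2).resolve_right hne
  refine ⟨?_, ?_, ?_⟩
  · ext x
    simp only [Set.mem_setOf_eq, Set.mem_insert_iff, Set.mem_singleton_iff,
      Set.mem_Ioo, key x, mul_eq_zero, sub_eq_zero]
    constructor
    · rintro ⟨-, (h | h) | h⟩
      · exact Or.inl h
      · exact Or.inr (Or.inl h)
      · exact Or.inr (Or.inr h)
    · rintro (h | h | h) <;> subst h
      · exact ⟨⟨by norm_num, by norm_num⟩, Or.inl (Or.inl rfl)⟩
      · exact ⟨⟨by linarith, by linarith⟩, Or.inl (Or.inr rfl)⟩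
      · exact ⟨⟨by linarith, by linarith⟩, Or.inr rfl⟩
  · exact ⟨by linarith, by linarith⟩
  · exact ⟨by linarith, by linarith⟩
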